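/- For every $n$ divisible by 4, there exists a set of $n$ points in $\mathbb{R}^3$ spanning at least $\frac{3}{16}n^3 - O(n^2)$ tetrahedra of minimum nonzero volume; concretely, at least $12(n/4-1)(n/4)^2$ such tetrahedra. -/

import Mathlib

noncomputable def tetVol (a b c d : Fin 3 → ℝ) : ℝ :=
  |Matrix.det (Matrix.of ![b - a, c - a, d - a])| / 6

def lx : Fin 4 → ℤ := ![0, 1, 0, 1]
def ly : Fin 4 → ℤ := ![0, 0, 1, 1]

def fZ : Fin 4 × ℕ → (Fin 3 → ℤ) := fun u => ![lx u.1, ly u.1, (u.2 : ℤ)]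

noncomputable def fR : Fin 4 × ℕ → (Fin 3 → ℝ) := fun u i => ((fZ u i : ℤ) : ℝ)

lemma line_inj : ∀ a b : Fin 4, lx a = lx b → ly a = ly b → a = b := by decide

lemma fZ_inj : Function.Injective fZ := by
  rintro ⟨a, k⟩ ⟨b, l⟩ h
  have h0 := congrFun h 0
  have h1 := congrFun h 1
  have h2 := congrFun h 2
  simp [fZ] at h0 h1 h2
  exact Prod.ext (line_inj a b h0 h1) (by exact_mod_cast h2)

lemma fR_inj : Function.Injective fR := by
  intro u v h
  apply fZ_inj
  funext i
  have := congrFun h i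
  simpa [fR] using this

lemma tetVol_int (A B C D : Fin 3 → ℤ) :
    tetVol (fun i => (A i : ℝ)) (fun i => (B i : ℝ)) (fun i => (C i : ℝ))
      (fun i => (D i : ℝ))
    = |((Matrix.det (Matrix.of ![B - A, C - A, D - A]) : ℤ) : ℝ)| / 6 := by
  unfold tetVol
  have h : (Matrix.of ![(fun i => (B i : ℝ)) - (fun i => (A i : ℝ)),
      (fun i => (C i : ℝ)) - (fun i => (A i : ℝ)),
      (fun i => (D i : ℝ)) - (fun i => (A i : ℝ))])
      = (Int.castRingHom ℝ).mapMatrix (Matrix.of ![B - A, C - A, D - A]) := by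
    ext i j
    fin_cases i <;> simp [Matrix.of_apply] <;> push_cast <;> ring
  rw [h, ← RingHom.map_det]; norm_num

lemma vol_special (a b c : Fin 4) (hb : b ≠ a) (hc : c ≠ a) (hbc : b ≠ c) (k i j : ℕ) :
    tetVol (fR (a, k)) (fR (a, k + 1)) (fR (b, i)) (fR (c, j)) = 1 / 6 := by
  have h : tetVol (fR (a, k)) (fR (a, k + 1)) (fR (b, i)) (fR (c, j))
      = |((Matrix.det (Matrix.of ![fZ (a, k+1) - fZ (a, k), fZ (b, i) - fZ (a, k),
          fZ (c, j) - fZ (a, k)]) : ℤ) : ℝ)| / 6 := tetVol_int _ _ _ _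
  rw [h]
  rw [Matrix.det_fin_three]
  simp only [fZ, Matrix.of_apply, Matrix.cons_val', Matrix.cons_val_zero, Matrix.cons_val_one,
    Matrix.head_cons, Matrix.empty_val', Matrix.cons_val_fin_one, Matrix.head_fin_const,
    Pi.sub_apply, Matrix.cons_val_two, Matrix.tail_cons]
  push_cast
  fin_cases a <;> fin_cases b <;> fin_cases c <;> simp_all [lx, ly] <;> ring_nf <;> norm_num

lemma pairlem (a b c a' b' c' k i j k' i' j' : ℕ)
    (hb : b ≠ a) (hc : c ≠ a) (hbc : b < c)
    (hb' : b' ≠ a') (hc' : c' ≠ a') (hbc' : b' < c')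
    (h : ({(a,k),(a,k+1),(b,i),(c,j)} : Finset (ℕ × ℕ))
        = {(a',k'),(a',k'+1),(b',i'),(c',j')}) :
    a = a' ∧ k = k' ∧ b = b' ∧ i = i' ∧ c = c' ∧ j = j' := by
  have m1 : (a,k) ∈ ({(a',k'),(a',k'+1),(b',i'),(c',j')} : Finset (ℕ × ℕ)) := by
    rw [← h]; simp
  have m2 : (a,k+1) ∈ ({(a',k'),(a',k'+1),(b',i'),(c',j')} : Finset (ℕ × ℕ)) := by
    rw [← h]; simp
  have m3 : (b,i) ∈ ({(a',k'),(a',k'+1),(b',i'),(c',j')} : Finset (ℕ × ℕ)) := by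
    rw [← h]; simp
  have m4 : (c,j) ∈ ({(a',k'),(a',k'+1),(b',i'),(c',j')} : Finset (ℕ × ℕ)) := by
    rw [← h]; simp
  simp only [Finset.mem_insert, Finset.mem_singleton, Prod.mk.injEq] at m1 m2 m3 m4
  rcases m1 with ⟨e1,e2⟩|⟨e1,e2⟩|⟨e1,e2⟩|⟨e1,e2⟩ <;>
    rcases m2 with ⟨e3,e4⟩|⟨e3,e4⟩|⟨e3,e4⟩|⟨e3,e4⟩ <;>
    rcases m3 with ⟨e5,e6⟩|⟨e5,e6⟩|⟨e5,e6⟩|⟨e5,e6⟩ <;>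
    rcases m4 with ⟨e7,e8⟩|⟨e7,e8⟩|⟨e7,e8⟩|⟨e7,e8⟩ <;>
    omega

theorem stmt2 (n : ℕ) (hn4 : 4 ∣ n) :
    ∃ S : Finset (Fin 3 → ℝ), S.card = n ∧
      ∃ v0 : ℝ, 0 < v0 ∧
        (∀ p q r s : Fin 3 → ℝ, p ∈ S → q ∈ S → r ∈ S → s ∈ S →
          tetVol p q r s ≠ 0 → v0 ≤ tetVol p q r s) ∧
        12 * (n / 4 - 1) * (n / 4) ^ 2 ≤
          {T : Finset (Fin 3 → ℝ) | T ⊆ S ∧ ∃ p q r s : Fin 3 → ℝ,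
            T = {p, q, r, s} ∧ T.card = 4 ∧ tetVol p q r s = v0}.ncard := by
  obtain ⟨m, rfl⟩ := hn4
  have hm : 4 * m / 4 = m := Nat.mul_div_cancel_left m (by norm_num)
  set S : Finset (Fin 3 → ℝ) :=
    Finset.image fR (Finset.univ ×ˢ Finset.range m) with hS
  refine ⟨S, ?_, 1/6, by norm_num, ?_, ?_⟩
  · rw [hS, Finset.card_image_of_injective _ fR_inj, Finset.card_product]
    simp [mul_comm]
  · -- minimum volume condition
    rintro p q r s hp hq hr hs hne
    rw [hS] at hp hq hr hs
    obtain ⟨up, -, rfl⟩ := Finset.mem_image.mp hp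
    obtain ⟨uq, -, rfl⟩ := Finset.mem_image.mp hq
    obtain ⟨ur, -, rfl⟩ := Finset.mem_image.mp hr
    obtain ⟨us, -, rfl⟩ := Finset.mem_image.mp hs
    have hv : tetVol (fR up) (fR uq) (fR ur) (fR us)
        = |((Matrix.det (Matrix.of ![fZ uq - fZ up, fZ ur - fZ up, fZ us - fZ up]) : ℤ) : ℝ)| / 6 :=
      tetVol_int _ _ _ _
    rw [hv] at hne ⊢
    set z : ℤ := Matrix.det (Matrix.of ![fZ uq - fZ up, fZ ur - fZ up, fZ us - fZ up])
    have hz : z ≠ 0 := by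
      intro h0; apply hne; rw [h0]; norm_num
    have h1 : (1 : ℤ) ≤ |z| := by
      rcases lt_or_gt_of_ne hz with h | h
      · calc (1:ℤ) ≤ -z := by omega
          _ ≤ |z| := neg_le_abs z
      · calc (1:ℤ) ≤ z := h
          _ ≤ |z| := le_abs_self z
    have h1' : (1 : ℝ) ≤ |(z : ℝ)| := by
      rw [← Int.cast_abs]; exact_mod_cast h1
    linarith
  · -- counting
    set A : Finset (Fin 4 × Fin 4 × Fin 4) :=
      Finset.univ.filter (fun t => t.2.1 ≠ t.1 ∧ t.2.2 ≠ t.1 ∧ t.2.1 < t.2.2) with hAdef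
    have hA : A.card = 12 := by decide
    set J : Finset ((Fin 4 × Fin 4 × Fin 4) × ℕ × ℕ × ℕ) :=
      A ×ˢ (Finset.range (m-1) ×ˢ (Finset.range m ×ˢ Finset.range m)) with hJdef
    set G : (Fin 4 × Fin 4 × Fin 4) × ℕ × ℕ × ℕ → Finset (Fin 3 → ℝ) :=
      fun w => {fR (w.1.1, w.2.1), fR (w.1.1, w.2.1+1),
        fR (w.1.2.1, w.2.2.1), fR (w.1.2.2, w.2.2.2)} with hGdef
    have hmemS : ∀ (ℓ : Fin 4) (h : ℕ), h < m → fR (ℓ, h) ∈ S := by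
      intro ℓ h hh
      rw [hS]
      exact Finset.mem_image.mpr ⟨(ℓ, h), by simp [Finset.mem_product, hh], rfl⟩
    have hne : ∀ u v : Fin 4 × ℕ, u ≠ v → fR u ≠ fR v :=
      fun u v h hh => h (fR_inj hh)
    have hGim : ∀ w : (Fin 4 × Fin 4 × Fin 4) × ℕ × ℕ × ℕ,
        G w = Finset.image fR {(w.1.1, w.2.1), (w.1.1, w.2.1+1),
          (w.1.2.1, w.2.2.1), (w.1.2.2, w.2.2.2)} := by
      intro w
      simp [hGdef, Finset.image_insert]
    -- each G w is in the target set
    have hGmem : ∀ w ∈ J, G w ∈ {T : Finset (Fin 3 → ℝ) | T ⊆ S ∧ ∃ p q r s : Fin 3 → ℝ,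
        T = {p, q, r, s} ∧ T.card = 4 ∧ tetVol p q r s = 1/6} := by
      rintro ⟨⟨a, b, c⟩, k, i, j⟩ hw
      rw [hJdef] at hw
      simp only [Finset.mem_product, Finset.mem_range, hAdef, Finset.mem_filter] at hw
      obtain ⟨⟨-, hb, hc, hbc⟩, hk, hi, hj⟩ := hw
      have hbc' : b ≠ c := ne_of_lt hbc
      have d12 : fR (a, k) ≠ fR (a, k+1) := hne _ _ (by simp)
      have d13 : fR (a, k) ≠ fR (b, i) := hne _ _ (by simp [Ne.symm hb])
      have d14 : fR (a, k) ≠ fR (c, j) := hne _ _ (by simp [Ne.symm hc])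
      have d23 : fR (a, k+1) ≠ fR (b, i) := hne _ _ (by simp [Ne.symm hb])
      have d24 : fR (a, k+1) ≠ fR (c, j) := hne _ _ (by simp [Ne.symm hc])
      have d34 : fR (b, i) ≠ fR (c, j) := hne _ _ (by simp [hbc'])
      have hcard : (G ((a,b,c),(k,i,j))).card = 4 := by
        rw [hGdef]
        rw [Finset.card_insert_of_notMem (by simp [d12, d13, d14]),
          Finset.card_insert_of_notMem (by simp [d23, d24]),
          Finset.card_insert_of_notMem (by simp [d34]),
          Finset.card_singleton]
      refine ⟨?_, fR (a,k), fR (a,k+1), fR (b,i), fR (c,j), rfl, hcard,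
        vol_special a b c hb hc hbc' k i j⟩
      intro x hx
      simp only [hGdef, Finset.mem_insert, Finset.mem_singleton] at hx
      rcases hx with rfl | rfl | rfl | rfl
      · exact hmemS _ _ (by omega)
      · exact hmemS _ _ (by omega)
      · exact hmemS _ _ hi
      · exact hmemS _ _ hj
    -- injectivity
    have hGinj : Set.InjOn G J := by
      rintro ⟨⟨a, b, c⟩, k, i, j⟩ hw ⟨⟨a', b', c'⟩, k', i', j'⟩ hw' heq
      rw [hJdef] at hw hw'
      simp only [Finset.mem_coe, Finset.mem_product, Finset.mem_range, hAdef,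
        Finset.mem_filter] at hw hw'
      obtain ⟨⟨-, hb, hc, hbc⟩, -, -, -⟩ := hw
      obtain ⟨⟨-, hb', hc', hbc'⟩, -, -, -⟩ := hw'
      rw [hGim, hGim] at heq
      have heq2 := Finset.image_injective fR_inj heq
      have heq3 := congrArg (Finset.image (Prod.map (Fin.val) id)) heq2
      simp only [Finset.image_insert, Finset.image_singleton, Prod.map_apply, id_eq] at heq3
      have := pairlem a.val b.val c.val a'.val b'.val c'.val k i j k' i' j'
        (fun h => hb (Fin.val_injective h)) (fun h => hc (Fin.val_injective h))
        (Fin.lt_def.mp hbc)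
        (fun h => hb' (Fin.val_injective h)) (fun h => hc' (Fin.val_injective h))
        (Fin.lt_def.mp hbc') heq3
      obtain ⟨e1, e2, e3, e4, e5, e6⟩ := this
      have : a = a' := Fin.val_injective e1
      have : b = b' := Fin.val_injective e3
      have : c = c' := Fin.val_injective e5
      subst_vars; rfl
    -- finish
    have hfin : {T : Finset (Fin 3 → ℝ) | T ⊆ S ∧ ∃ p q r s : Fin 3 → ℝ,
        T = {p, q, r, s} ∧ T.card = 4 ∧ tetVol p q r s = 1/6}.Finite := by
      apply (S.powerset.finite_toSet).subset
      rintro T ⟨hT, -⟩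
      simpa [Finset.mem_powerset] using hT
    have hsub : ↑(J.image G) ⊆ {T : Finset (Fin 3 → ℝ) | T ⊆ S ∧ ∃ p q r s : Fin 3 → ℝ,
        T = {p, q, r, s} ∧ T.card = 4 ∧ tetVol p q r s = 1/6} := by
      intro T hT
      simp only [Finset.coe_image, Set.mem_image, Finset.mem_coe] at hT
      obtain ⟨w, hw, rfl⟩ := hT
      exact hGmem w hw
    have hcardJ : J.card = 12 * (m - 1) * m ^ 2 := by
      rw [hJdef, Finset.card_product, Finset.card_product, Finset.card_product, hA]
      simp [Finset.card_range]
      ring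
    have hchain : J.card ≤ {T : Finset (Fin 3 → ℝ) | T ⊆ S ∧ ∃ p q r s : Fin 3 → ℝ,
        T = {p, q, r, s} ∧ T.card = 4 ∧ tetVol p q r s = 1/6}.ncard := by
      rw [← Finset.card_image_of_injOn hGinj, ← Set.ncard_coe_finset]
      exact Set.ncard_le_ncard hsub hfin
    rw [hm]
    rw [hcardJ] at hchain
    exact hchain
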